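/- Let 0 ≤ γ ≤ γ' ≤ 1 and let β^γ denote the weight sequence (e^{n^γ})_{n≥1}. Then for every subset E of the positive integers, the upper β^γ-density of E is at most the upper β^{γ'}-density of E; in particular, the upper natural density of E equals the upper β^0-density and is a lower bound, while the upper β^1-density is an upper bound. -/

import Mathlib

open Filter Finset

/-- Upper `β`-density of a set of positive integers. -/
noncomputable def upperDensity (β : ℕ → ℝ) (E : Set ℕ) : ℝ :=
  Filter.limsup
    (fun n : ℕ =>
      (∑ k ∈ Finset.Icc 1 n, E.indicator β k) / ∑ k ∈ Finset.Icc 1 n, β k)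
    Filter.atTop

private lemma ind_nonneg {E : Set ℕ} {f : ℕ → ℝ} {i : ℕ} (h : 0 ≤ f i) :
    0 ≤ E.indicator f i :=
  Set.indicator_apply_nonneg (fun _ => h)

private lemma ind_le {E : Set ℕ} {f : ℕ → ℝ} {i : ℕ} (h : 0 ≤ f i) :
    E.indicator f i ≤ f i := by
  by_cases hi : i ∈ E <;> simp [Set.indicator, hi, h]

private lemma sum_pos_of_pos {α : ℕ → ℝ} (hα : ∀ n, 1 ≤ n → 0 < α n) {n : ℕ} (hn : 1 ≤ n) :
    0 < ∑ k ∈ Icc 1 n, α k := by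
  apply Finset.sum_pos
  · intro i hi
    exact hα i (Finset.mem_Icc.mp hi).1
  · exact ⟨1, Finset.mem_Icc.mpr ⟨le_refl 1, hn⟩⟩

private lemma sum_ind_nonneg {α : ℕ → ℝ} (hα : ∀ n, 1 ≤ n → 0 < α n) (E : Set ℕ) (n : ℕ) :
    0 ≤ ∑ k ∈ Icc 1 n, E.indicator α k :=
  Finset.sum_nonneg fun i hi => ind_nonneg (hα i (Finset.mem_Icc.mp hi).1).le

private lemma ratio_mem {α : ℕ → ℝ} (hα : ∀ n, 1 ≤ n → 0 < α n) (E : Set ℕ) (n : ℕ) :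
    0 ≤ (∑ k ∈ Icc 1 n, E.indicator α k) / ∑ k ∈ Icc 1 n, α k ∧
      (∑ k ∈ Icc 1 n, E.indicator α k) / ∑ k ∈ Icc 1 n, α k ≤ 1 := by
  rcases Nat.eq_zero_or_pos n with rfl | hn
  · simp
  have hS := sum_pos_of_pos hα hn
  have hnum := sum_ind_nonneg hα E n
  constructor
  · exact div_nonneg hnum hS.le
  · rw [div_le_one hS]
    exact Finset.sum_le_sum fun i hi => ind_le (hα i (Finset.mem_Icc.mp hi).1).le

/-- The key comparison lemma: if `β/α` is nondecreasing then the upper `α`-density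
is at most the upper `β`-density. -/
theorem upperDensity_le_upperDensity (α β : ℕ → ℝ)
    (hα : ∀ n, 1 ≤ n → 0 < α n) (hβ : ∀ n, 1 ≤ n → 0 < β n)
    (hw : ∀ n, 1 ≤ n → β n / α n ≤ β (n + 1) / α (n + 1))
    (hS : Tendsto (fun n => ∑ k ∈ Icc 1 n, α k) atTop atTop)
    (E : Set ℕ) : upperDensity α E ≤ upperDensity β E := by
  set A : ℕ → ℝ := fun n => ∑ k ∈ Icc 1 n, E.indicator α k with hA
  set Sa : ℕ → ℝ := fun n => ∑ k ∈ Icc 1 n, α k with hSa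
  set B : ℕ → ℝ := fun n => ∑ k ∈ Icc 1 n, E.indicator β k with hB
  set Sb : ℕ → ℝ := fun n => ∑ k ∈ Icc 1 n, β k with hSb
  set f : ℕ → ℝ := fun n => A n / Sa n with hf
  set g : ℕ → ℝ := fun n => B n / Sb n with hg
  have hf01 : ∀ n, 0 ≤ f n ∧ f n ≤ 1 := ratio_mem hα E
  have hg01 : ∀ n, 0 ≤ g n ∧ g n ≤ 1 := ratio_mem hβ E
  have hfbdd : IsBoundedUnder (· ≤ ·) atTop f := isBoundedUnder_of ⟨1, fun n => (hf01 n).2⟩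
  have hgbdd : IsBoundedUnder (· ≤ ·) atTop g := isBoundedUnder_of ⟨1, fun n => (hg01 n).2⟩
  have hfcob : IsCoboundedUnder (· ≤ ·) atTop f :=
    (isBoundedUnder_of ⟨0, fun n => (hf01 n).1⟩ : IsBoundedUnder (· ≥ ·) atTop f).isCoboundedUnder_le
  set L : ℝ := limsup g atTop with hL
  have hL0 : 0 ≤ L :=
    le_limsup_of_frequently_le (Frequently.of_forall fun n => (hg01 n).1) hgbdd
  have main : ∀ ε : ℝ, 0 < ε → limsup f atTop ≤ L + ε := by
    intro ε hε
    set c : ℝ := L + ε / 2 with hc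
    have hc0 : 0 < c := by positivity
    have hlt : limsup g atTop < c := by unfold c; linarith
    obtain ⟨N, hN⟩ := eventually_atTop.mp
      ((eventually_lt_of_limsup_lt hlt hgbdd).and (eventually_ge_atTop 1))
    have hN1 : 1 ≤ N := (hN N le_rfl).2
    -- D n ≥ 0 for n ≥ N
    have hBc : ∀ n, N ≤ n → B n ≤ c * Sb n := by
      intro n hn
      have h1n : 1 ≤ n := le_trans hN1 hn
      have := (hN n hn).1
      rw [hg, div_lt_iff₀ (sum_pos_of_pos hβ h1n)] at this
      exact this.le
    set r : ℕ → ℝ := fun n => α n / β n with hr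
    have hrpos : ∀ n, 1 ≤ n → 0 < r n := fun n hn => div_pos (hα n hn) (hβ n hn)
    have hranti : ∀ n, 1 ≤ n → r (n + 1) ≤ r n := by
      intro n hn
      have h := hw n hn
      rw [div_le_div_iff₀ (hα n hn) (hα (n+1) (le_trans hn (Nat.le_succ n)))] at h
      rw [hr, div_le_div_iff₀ (hβ (n+1) (le_trans hn (Nat.le_succ n))) (hβ n hn)]
      linarith
    set D : ℕ → ℝ := fun n => c * Sb n - B n with hD
    have hD0 : ∀ n, N ≤ n → 0 ≤ D n := fun n hn => by
      simp only [hD, sub_nonneg]; exact hBc n hn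
    set K : ℝ := A N + D N * r N - c * Sa N with hK
    have key : ∀ n, N ≤ n → A n + D n * r n ≤ c * Sa n + K := by
      intro n hn
      induction n, hn using Nat.le_induction with
      | base => rw [hK]; ring_nf; exact le_rfl
      | succ n hmn ih =>
        have h1n : 1 ≤ n := le_trans hN1 hmn
        have hsucc : ∀ u : ℕ → ℝ, ∑ k ∈ Icc 1 (n+1), u k = (∑ k ∈ Icc 1 n, u k) + u (n+1) :=
          fun u => Finset.sum_Icc_succ_top (Nat.le_succ_of_le h1n) u
        have hA1 : A (n+1) = A n + E.indicator α (n+1) := hsucc _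
        have hB1 : B (n+1) = B n + E.indicator β (n+1) := hsucc _
        have hSa1 : Sa (n+1) = Sa n + α (n+1) := hsucc _
        have hSb1 : Sb (n+1) = Sb n + β (n+1) := hsucc _
        have hβ1 : (0:ℝ) < β (n+1) := hβ (n+1) (le_trans h1n (Nat.le_succ n))
        have hab : E.indicator α (n+1) = E.indicator β (n+1) * r (n+1) := by
          by_cases hm : (n+1) ∈ E
          · simp [Set.indicator, hm, hr]
            field_simp
          · simp [Set.indicator, hm]
        have hbr : β (n+1) * r (n+1) = α (n+1) := by
          rw [hr]; field_simp
        have hDn1 : D (n+1) = D n + c * β (n+1) - E.indicator β (n+1) := by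
          simp only [hD, hSb1, hB1]; ring
        have step1 : A (n+1) + D (n+1) * r (n+1) = A n + D n * r (n+1) + c * α (n+1) := by
          rw [hA1, hDn1, hab, ← hbr]; ring
        have step2 : D n * r (n+1) ≤ D n * r n :=
          mul_le_mul_of_nonneg_left (hranti n h1n) (hD0 n hmn)
        calc A (n+1) + D (n+1) * r (n+1) = A n + D n * r (n+1) + c * α (n+1) := step1
          _ ≤ A n + D n * r n + c * α (n+1) := by linarith
          _ ≤ c * Sa n + K + c * α (n+1) := by linarith
          _ = c * Sa (n+1) + K := by rw [hSa1]; ring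
    set C : ℝ := A N + D N * r N with hC
    have hKC : K ≤ C := by
      rw [hK, hC]
      have : 0 ≤ c * Sa N := mul_nonneg hc0.le (sum_pos_of_pos hα hN1).le
      linarith
    have hfc : ∀ n, N ≤ n → f n ≤ c + C / Sa n := by
      intro n hn
      have h1n : 1 ≤ n := le_trans hN1 hn
      have hSapos := sum_pos_of_pos hα h1n
      have hAle : A n ≤ c * Sa n + C := by
        have h1 := key n hn
        have h2 : 0 ≤ D n * r n := mul_nonneg (hD0 n hn) (hrpos n h1n).le
        linarith
      rw [hf]
      calc A n / Sa n ≤ (c * Sa n + C) / Sa n := by gcongr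
        _ = c + C / Sa n := by have hSa0 : Sa n ≠ 0 := hSapos.ne'; field_simp
    have htend : Tendsto (fun n => c + C / Sa n) atTop (nhds c) := by
      have : Tendsto (fun n => C / Sa n) atTop (nhds 0) :=
        Tendsto.div_atTop tendsto_const_nhds hS
      simpa using tendsto_const_nhds.add this
    have hlimle : limsup f atTop ≤ limsup (fun n => c + C / Sa n) atTop := by
      apply limsup_le_limsup (eventually_atTop.mpr ⟨N, hfc⟩) hfcob htend.isBoundedUnder_le
    rw [htend.limsup_eq] at hlimle
    unfold c at hlimle
    linarith
  exact le_of_forall_pos_le_add main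


private lemma exp_weight_pos (γ : ℝ) (n : ℕ) (_ : 1 ≤ n) :
    0 < Real.exp ((n : ℝ) ^ γ) := Real.exp_pos _

private lemma exp_weight_hw (γ γ' : ℝ) (h0 : 0 ≤ γ) (h1 : γ ≤ γ') (n : ℕ) (hn : 1 ≤ n) :
    Real.exp ((n : ℝ) ^ γ') / Real.exp ((n : ℝ) ^ γ)
      ≤ Real.exp (((n + 1 : ℕ) : ℝ) ^ γ') / Real.exp (((n + 1 : ℕ) : ℝ) ^ γ) := by
  rw [← Real.exp_sub, ← Real.exp_sub, Real.exp_le_exp]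
  push_cast
  have hb1' : (1 : ℝ) ≤ (n : ℝ) := by exact_mod_cast hn
  set b : ℝ := (n : ℝ) with hb
  have hb1 : (1 : ℝ) ≤ b := hb1'
  set a : ℝ := b + 1 with ha
  have hba : b ≤ a := by linarith
  have hb0 : (0 : ℝ) ≤ b := by linarith
  have ha0 : (0 : ℝ) ≤ a := by linarith
  set δ : ℝ := γ' - γ with hδ
  have hδ0 : 0 ≤ δ := by simp [hδ]; linarith
  have haγ' : a ^ γ' = a ^ γ * a ^ δ := by
    rw [← Real.rpow_add (by linarith : (0:ℝ) < a)]; rw [hδ]; ring_nf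
  have hbγ' : b ^ γ' = b ^ γ * b ^ δ := by
    rw [← Real.rpow_add (by linarith : (0:ℝ) < b)]; rw [hδ]; ring_nf
  have h1δ : (1 : ℝ) ≤ b ^ δ := by
    calc (1:ℝ) = b ^ (0:ℝ) := (Real.rpow_zero b).symm
      _ ≤ b ^ δ := Real.rpow_le_rpow_of_exponent_le hb1 hδ0
  have habδ : b ^ δ ≤ a ^ δ := Real.rpow_le_rpow hb0 hba hδ0
  have habγ : b ^ γ ≤ a ^ γ := Real.rpow_le_rpow hb0 hba h0
  have haγ0 : 0 ≤ a ^ γ := Real.rpow_nonneg ha0 γ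
  have hbγ0 : 0 ≤ b ^ γ := Real.rpow_nonneg hb0 γ
  rw [haγ', hbγ']
  nlinarith

private lemma exp_weight_tendsto (γ : ℝ) :
    Tendsto (fun n : ℕ => ∑ k ∈ Icc 1 n, Real.exp ((k : ℝ) ^ γ)) atTop atTop := by
  apply tendsto_atTop_mono (f := fun n : ℕ => (n : ℝ))
  · intro n
    calc (n : ℝ) = ∑ _k ∈ Icc 1 n, (1 : ℝ) := by
          simp [Nat.card_Icc]
      _ ≤ ∑ k ∈ Icc 1 n, Real.exp ((k : ℝ) ^ γ) := by
          apply Finset.sum_le_sum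
          intro i _
          calc (1:ℝ) = Real.exp 0 := Real.exp_zero.symm
            _ ≤ Real.exp ((i:ℝ)^γ) := Real.exp_le_exp.mpr (Real.rpow_nonneg (Nat.cast_nonneg i) γ)
  · exact tendsto_natCast_atTop_atTop

private lemma upperDensity_le_of_exponents (γ γ' : ℝ) (h0 : 0 ≤ γ) (h1 : γ ≤ γ') (E : Set ℕ) :
    upperDensity (fun n => Real.exp ((n : ℝ) ^ γ)) E
      ≤ upperDensity (fun n => Real.exp ((n : ℝ) ^ γ')) E :=
  upperDensity_le_upperDensity _ _ (exp_weight_pos γ) (exp_weight_pos γ')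
    (exp_weight_hw γ γ' h0 h1) (exp_weight_tendsto γ) E

theorem stmt_1 (γ γ' : ℝ) (h0 : 0 ≤ γ) (h1 : γ ≤ γ') (h2 : γ' ≤ 1) (E : Set ℕ) :
    Filter.limsup
        (fun n : ℕ => (∑ k ∈ Finset.Icc 1 n, E.indicator (fun _ => (1 : ℝ)) k) / n)
        Filter.atTop
      = upperDensity (fun n => Real.exp ((n : ℝ) ^ (0 : ℝ))) E ∧
    upperDensity (fun n => Real.exp ((n : ℝ) ^ (0 : ℝ))) E
      ≤ upperDensity (fun n => Real.exp ((n : ℝ) ^ γ)) E ∧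
    upperDensity (fun n => Real.exp ((n : ℝ) ^ γ)) E
      ≤ upperDensity (fun n => Real.exp ((n : ℝ) ^ γ')) E ∧
    upperDensity (fun n => Real.exp ((n : ℝ) ^ γ')) E
      ≤ upperDensity (fun n => Real.exp ((n : ℝ) ^ (1 : ℝ))) E := by
  have hγ'0 : 0 ≤ γ' := le_trans h0 h1
  refine ⟨?_, upperDensity_le_of_exponents 0 γ le_rfl h0 E,
    upperDensity_le_of_exponents γ γ' h0 h1 E,
    upperDensity_le_of_exponents γ' 1 hγ'0 h2 E⟩
  unfold upperDensity
  congr 1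
  funext n
  have h1 : ∀ k : ℕ, Real.exp ((k : ℝ) ^ (0 : ℝ)) = Real.exp 1 := by
    intro k; rw [Real.rpow_zero]
  have h2 : ∀ k : ℕ, E.indicator (fun n : ℕ => Real.exp ((n : ℝ) ^ (0 : ℝ))) k
      = Real.exp 1 * E.indicator (fun _ => (1:ℝ)) k := by
    intro k
    by_cases hk : k ∈ E <;> simp [Set.indicator, hk, h1 k]
  rw [Finset.sum_congr rfl (fun k _ => h2 k), Finset.sum_congr rfl (fun k _ => h1 k),
    ← Finset.mul_sum, Finset.sum_const, Nat.card_Icc]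
  simp only [nsmul_eq_mul, Nat.add_sub_cancel]
  rw [mul_comm ((n : ℝ)) (Real.exp 1), mul_div_mul_left _ _ (Real.exp_ne_zero 1)]
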